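/- Let p = 2, q = 2^h with h ≥ 1 (so λ = 2^h), m ≥ 1, π a permutation of {1,…,m}, and c_1,…,c_m, c ∈ Z_{2^h}. Then the two codes C_0^2 and C_1^2 form a (2,2,2^m)-CCC over Z_{2^h}: for all t,t' ∈ {0,1} and all |u| < 2^m, C(C_t^2, C_{t'}^2)(u) = 2^{m+1} if u = 0 and t = t', and equals 0 if (0 < |u| < 2^m and t = t') or (t ≠ t'). In particular, for each t ∈ {0,1} the pair (ψ(a_t^0), ψ(a_t^1)) is a Golay complementary pair of length 2^m. -/

import Mathlib

open Finset

/-- `ω_λ = exp(2π√(-1)/λ)`. -/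
noncomputable def omg (lam : ℕ) : ℂ := Complex.exp (2 * Real.pi * Complex.I / lam)

/-- Aperiodic cross-correlation of two length-`L` complex sequences at shift `u`. -/
noncomputable def aCorr (L : ℕ) (a b : ℕ → ℂ) (u : ℤ) : ℂ :=
  if 0 ≤ u then
    ∑ i ∈ Finset.range (L - u.toNat), a (i + u.toNat) * (starRingEnd ℂ) (b i)
  else
    ∑ i ∈ Finset.range (L - (-u).toNat), a i * (starRingEnd ℂ) (b (i + (-u).toNat))

/-- Cross-correlation sum of two `M × L` codes (matrices given row-wise). -/
noncomputable def codeCorr (M L : ℕ) (C D : ℕ → ℕ → ℂ) (u : ℤ) : ℂ :=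
  ∑ ν ∈ Finset.range M, aCorr L (C ν) (D ν) u

/-- Base-`p` digit vector of `γ` (digit `j` is `γ / p^j % p`). -/
def dig (p m γ : ℕ) : Fin m → ℕ := fun j => γ / p ^ (j : ℕ) % p

/-- The quadratic multivariable function
`f(v) = (λ/p)·Σ_{β=1}^{m-1} v_{π(β)} v_{π(β+1)} + Σ_{β=1}^{m} c_β v_β` (as an integer). -/
def fQuad (p m lam : ℕ) (π : Equiv.Perm (Fin m)) (cf : Fin m → ZMod lam)
    (v : Fin m → ℕ) : ℤ :=
  ((lam / p : ℕ) : ℤ) * ∑ β : Fin (m - 1),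
      (v (π (Fin.castLE (Nat.sub_le m 1) β)) : ℤ) *
        (v (π ⟨(β : ℕ) + 1, by have := β.isLt; omega⟩) : ℤ)
    + ∑ β : Fin m, ((cf β).val : ℤ) * (v β : ℤ)

/-- `a_t^α(v) = f(v) + (λ/p)·α·v_{π(1)} + (λ/p)·t·v_{π(m)} + c` (as an integer). -/
def aFun (p m lam : ℕ) (hm : 0 < m) (π : Equiv.Perm (Fin m)) (cf : Fin m → ZMod lam)
    (c : ZMod lam) (t α : ℕ) (v : Fin m → ℕ) : ℤ :=
  fQuad p m lam π cf v
    + ((lam / p : ℕ) : ℤ) * (α : ℤ) * (v (π ⟨0, hm⟩) : ℤ)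
    + ((lam / p : ℕ) : ℤ) * (t : ℤ) * (v (π ⟨m - 1, by omega⟩) : ℤ)
    + ((c.val : ℕ) : ℤ)

/-- The code `C_t^p`: the `p × p^m` matrix whose `α`-th row is `ψ(a_t^α)`. -/
noncomputable def codeC (p m lam : ℕ) (hm : 0 < m) (π : Equiv.Perm (Fin m))
    (cf : Fin m → ZMod lam) (c : ZMod lam) (t : ℕ) : ℕ → ℕ → ℂ :=
  fun α γ => omg lam ^ (aFun p m lam hm π cf c t α (dig p m γ))



lemma two_pow_le_of_bit1 {k γ : ℕ} (h1 : γ / 2^k % 2 = 1) : 2^k ≤ γ := by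
  have h2 : 1 ≤ γ / 2^k := by
    refine Nat.one_le_iff_ne_zero.mpr fun h => ?_
    rw [h] at h1
    simp at h1
  calc 2^k = 2^k * 1 := by ring
  _ ≤ 2^k * (γ / 2^k) := Nat.mul_le_mul_left _ h2
  _ ≤ γ := Nat.mul_div_le γ (2^k)

lemma add_div_lt (γ k j : ℕ) (hjk : j < k) : (γ + 2^k)/2^j % 2 = γ/2^j % 2 := by
  have : 2^k = 2^j * (2 * 2^(k-j-1)) := by
    rw [← pow_succ']; rw [← pow_add]; congr 1; omega
  rw [this, Nat.add_mul_div_left _ _ (pow_pos (by norm_num) j),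
    Nat.add_mul_mod_self_left]

lemma add_div_gt (γ k j : ℕ) (hjk : k < j) (h0 : γ/2^k % 2 = 0) :
    (γ + 2^k)/2^j = γ/2^j := by
  have hj : 2^j = 2^k * 2^(j-k) := by rw [← pow_add]; congr 1; omega
  rw [hj, ← Nat.div_div_eq_div_mul, ← Nat.div_div_eq_div_mul]
  have : (γ + 2^k)/2^k = γ/2^k + 1 := Nat.add_div_right _ (pow_pos (by norm_num) k)
  rw [this]
  have h2 : 2^(j-k) = 2 * 2^(j-k-1) := by rw [← pow_succ']; congr 1; omega
  rw [h2, ← Nat.div_div_eq_div_mul, ← Nat.div_div_eq_div_mul]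
  congr 1
  omega

lemma add_div_self' (γ k : ℕ) : (γ + 2^k)/2^k % 2 = (γ/2^k % 2 + 1) % 2 := by
  rw [Nat.add_div_right _ (pow_pos (by norm_num) k), Nat.add_mod]

lemma add_lt_of_bit0 {γ k m : ℕ} (h0 : γ/2^k%2 = 0) (hk : k < m) (hγ : γ < 2^m) :
    γ + 2^k < 2^m := by
  have hm2 : 2^m = 2^k * 2^(m-k) := by rw [← pow_add]; congr 1; omega
  have hb : γ / 2^k < 2^(m-k) := by
    rw [Nat.div_lt_iff_lt_mul (pow_pos (by norm_num) k)]
    rw [hm2] at hγ; nlinarith [hγ]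
  have he : 2^(m-k) % 2 = 0 := by
    have : 2^(m-k) = 2 * 2^(m-k-1) := by rw [← pow_succ']; congr 1; omega
    omega
  have hb2 : γ / 2^k + 2 ≤ 2^(m-k) := by omega
  have hmod := Nat.div_add_mod γ (2^k)
  have hlt : γ % 2^k < 2^k := Nat.mod_lt _ (pow_pos (by norm_num) k)
  calc γ + 2^k = 2^k * (γ/2^k) + γ % 2^k + 2^k := by omega
  _ < 2^k * (γ/2^k + 2) := by ring_nf; omega
  _ ≤ 2^k * 2^(m-k) := Nat.mul_le_mul_left _ hb2
  _ = 2^m := hm2.symm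

/-- flip bit `k` of `γ`. -/
def flp (k γ : ℕ) : ℕ := if γ / 2^k % 2 = 0 then γ + 2^k else γ - 2^k

lemma bit_lt_two (γ j : ℕ) : γ / 2^j % 2 < 2 := Nat.mod_lt _ (by norm_num)

lemma sub_decomp {γ k : ℕ} (h1 : γ / 2^k % 2 = 1) :
    γ = (γ - 2^k) + 2^k ∧ (γ - 2^k)/2^k % 2 = 0 := by
  have hle := two_pow_le_of_bit1 h1
  have he : γ = (γ - 2^k) + 2^k := by omega
  constructor
  · exact he
  · have : ((γ - 2^k) + 2^k)/2^k = (γ-2^k)/2^k + 1 :=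
      Nat.add_div_right _ (pow_pos (by norm_num) k)
    rw [← he] at this
    omega

lemma flp_dig_ne {k γ : ℕ} (j : ℕ) (hj : j ≠ k) : flp k γ / 2^j % 2 = γ / 2^j % 2 := by
  unfold flp
  rcases Nat.lt_or_ge j k with hlt | hge
  · split
    · exact add_div_lt γ k j hlt
    · next h1 =>
      have h1 : γ / 2^k % 2 = 1 := by have := bit_lt_two γ k; omega
      obtain ⟨he, h0⟩ := sub_decomp h1
      conv_rhs => rw [he]
      exact (add_div_lt (γ - 2^k) k j hlt).symm
  · have hgt : k < j := by omega
    split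
    · next h0 => rw [add_div_gt γ k j hgt h0]
    · next h1 =>
      have h1 : γ / 2^k % 2 = 1 := by have := bit_lt_two γ k; omega
      obtain ⟨he, h0⟩ := sub_decomp h1
      conv_rhs => rw [he]
      rw [add_div_gt (γ - 2^k) k j hgt h0]

lemma flp_dig_self (k γ : ℕ) : flp k γ / 2^k % 2 = 1 - γ / 2^k % 2 := by
  unfold flp
  split
  · next h0 => rw [add_div_self' γ k, h0]
  · next h1 =>
    have h1 : γ / 2^k % 2 = 1 := by have := bit_lt_two γ k; omega
    obtain ⟨he, h0⟩ := sub_decomp h1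
    rw [h0, h1]

lemma flp_lt {k γ m : ℕ} (hk : k < m) (hγ : γ < 2^m) : flp k γ < 2^m := by
  unfold flp
  split
  · next h0 => exact add_lt_of_bit0 h0 hk hγ
  · exact lt_of_le_of_lt (Nat.sub_le _ _) hγ

lemma flp_flp (k γ : ℕ) : flp k (flp k γ) = γ := by
  unfold flp
  split
  · next h0 =>
    rw [add_div_self' γ k, h0]
    simp
  · next h1 =>
    have h1 : γ / 2^k % 2 = 1 := by have := bit_lt_two γ k; omega
    obtain ⟨he, h0⟩ := sub_decomp h1
    rw [h0]
    simp
    omega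
lemma flp_ne (k γ : ℕ) : flp k γ ≠ γ := by
  unfold flp
  have : 0 < 2^k := pow_pos (by norm_num) k
  split
  · omega
  · next h1 =>
    have h1 : γ / 2^k % 2 = 1 := by have := bit_lt_two γ k; omega
    have := two_pow_le_of_bit1 h1
    omega

lemma flp_add {k i u : ℕ} (hb : (i+u) / 2^k % 2 = i / 2^k % 2) :
    flp k (i + u) = flp k i + u := by
  unfold flp
  rw [hb]
  split
  · omega
  · next h1 =>
    have h1 : i / 2^k % 2 = 1 := by have := bit_lt_two i k; omega
    have := two_pow_le_of_bit1 h1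
    omega

lemma eq_of_dig {m γ δ : ℕ} (hγ : γ < 2^m) (hδ : δ < 2^m)
    (h : ∀ j < m, γ / 2^j % 2 = δ / 2^j % 2) : γ = δ := by
  refine Nat.eq_of_testBit_eq fun j => ?_
  rcases Nat.lt_or_ge j m with hj | hj
  · rw [Nat.testBit_eq_decide_div_mod_eq, Nat.testBit_eq_decide_div_mod_eq, h j hj]
  · have h1 : γ < 2^j := lt_of_lt_of_le hγ (Nat.pow_le_pow_right (by norm_num) hj)
    have h2 : δ < 2^j := lt_of_lt_of_le hδ (Nat.pow_le_pow_right (by norm_num) hj)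
    rw [Nat.testBit_lt_two_pow h1, Nat.testBit_lt_two_pow h2]


lemma omg_ne_zero (lam : ℕ) : omg lam ≠ 0 := Complex.exp_ne_zero _

lemma omg_pow_half {h : ℕ} (hh : 0 < h) : omg (2^h) ^ ((2:ℤ)^(h-1)) = -1 := by
  have h2 : ((2:ℤ)^(h-1)) = ((2^(h-1) : ℕ) : ℤ) := by push_cast; ring
  rw [h2, zpow_natCast]
  unfold omg
  rw [← Complex.exp_nat_mul]
  have harg : (2^(h-1) : ℕ) * (2 * Real.pi * Complex.I / ((2:ℕ)^h : ℕ)) = Real.pi * Complex.I := by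
    have hcast : (((2:ℕ)^h : ℕ) : ℂ) = (2:ℂ)^h := by push_cast; ring
    rw [hcast]
    have hsplit : (2:ℂ)^h = 2 * (2:ℂ)^(h-1) := by
      rw [← pow_succ']
      congr 1
      omega
    rw [hsplit]
    have hne1 : ((2:ℂ)^(h-1)) ≠ 0 := pow_ne_zero _ two_ne_zero
    field_simp
    push_cast; ring
  rw [harg, Complex.exp_pi_mul_I]

lemma omg_zpow_add_half {h : ℕ} (hh : 0 < h) (n ε : ℤ) (hε : Odd ε) :
    omg (2^h) ^ (n + 2^(h-1) * ε) = - omg (2^h) ^ n := by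
  rw [zpow_add₀ (omg_ne_zero _), zpow_mul, omg_pow_half hh]
  rw [hε.neg_one_zpow]
  ring

lemma omg_conj_zpow (lam : ℕ) (n : ℤ) :
    (starRingEnd ℂ) (omg lam ^ n) = omg lam ^ (-n) := by
  have hc : (starRingEnd ℂ) (omg lam) = (omg lam)⁻¹ := by
    unfold omg
    rw [← Complex.exp_conj, ← Complex.exp_neg]
    congr 1
    simp [map_div₀, Complex.conj_I, map_ofNat]
    ring
  rw [map_zpow₀, hc, inv_zpow, ← zpow_neg]






section Main

variable {h m : ℕ}

lemma dig_lt (m γ : ℕ) (j : Fin m) : dig 2 m γ j < 2 := Nat.mod_lt _ (by norm_num)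

/-- set of chain indices where digits of `i+u` and `i` differ -/
def mset (m : ℕ) (π : Equiv.Perm (Fin m)) (u i : ℕ) : Finset (Fin m) :=
  Finset.univ.filter (fun β => dig 2 m (i+u) (π β) ≠ dig 2 m i (π β))

lemma mem_mset {π : Equiv.Perm (Fin m)} {u i : ℕ} {β : Fin m} :
    β ∈ mset m π u i ↔ dig 2 m (i+u) (π β) ≠ dig 2 m i (π β) := by
  simp [mset]

lemma mset_nonempty {π : Equiv.Perm (Fin m)} {u i : ℕ} (hu : 0 < u)
    (hγ : i + u < 2^m) : (mset m π u i).Nonempty := by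
  by_contra hne
  rw [Finset.not_nonempty_iff_eq_empty] at hne
  have hall : ∀ j < m, (i+u) / 2^j % 2 = i / 2^j % 2 := by
    intro j hj
    have hβ : (π.symm ⟨j, hj⟩) ∉ mset m π u i := by rw [hne]; exact Finset.notMem_empty _
    rw [mem_mset] at hβ
    push_neg at hβ
    simpa [dig] using hβ
  have := eq_of_dig hγ (by omega) hall
  omega

noncomputable def bidx (m : ℕ) (hm : 0 < m) (π : Equiv.Perm (Fin m)) (u i : ℕ) : Fin m :=
  if hne : (mset m π u i).Nonempty then (mset m π u i).min' hne else ⟨0, hm⟩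

noncomputable def rix (m : ℕ) (hm : 0 < m) (π : Equiv.Perm (Fin m)) (u i : ℕ) : Fin m :=
  ⟨(bidx m hm π u i : ℕ) - 1, by have := (bidx m hm π u i).isLt; omega⟩

noncomputable def kpos (m : ℕ) (hm : 0 < m) (π : Equiv.Perm (Fin m)) (u i : ℕ) : ℕ :=
  (π (rix m hm π u i) : ℕ)

noncomputable def sig (m : ℕ) (hm : 0 < m) (π : Equiv.Perm (Fin m)) (u i : ℕ) : ℕ :=
  flp (kpos m hm π u i) i

lemma dig_flp_pos (m k γ : ℕ) (j : Fin m) (hj : (j:ℕ) ≠ k) :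
    dig 2 m (flp k γ) j = dig 2 m γ j := flp_dig_ne (j:ℕ) hj

end Main

lemma fin_sum_to_range {m : ℕ} (π : Equiv.Perm (Fin m)) (x : Fin m → ℕ)
    (X : ℕ → ℤ) (hX : X = fun n => if hn : n < m then (x (π ⟨n, hn⟩) : ℤ) else 0) :
    (∑ β : Fin (m - 1),
      (x (π (Fin.castLE (Nat.sub_le m 1) β)) : ℤ) *
        (x (π ⟨(β : ℕ) + 1, by have := β.isLt; omega⟩) : ℤ))
    = ∑ i ∈ Finset.range (m-1), X i * X (i+1) := by
  rw [← Fin.sum_univ_eq_sum_range (fun i => X i * X (i+1)) (m-1)]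
  refine Finset.sum_congr rfl fun β _ => ?_
  have h1 : (β : ℕ) < m := by have := β.isLt; omega
  have h2 : (β : ℕ) + 1 < m := by have := β.isLt; omega
  rw [hX]
  simp only [dif_pos h1, dif_pos h2]
  rfl

section Exp
variable {h m : ℕ} (hh : 0 < h) (hm : 0 < m) (π : Equiv.Perm (Fin m))
  (cf : Fin m → ZMod (2^h)) (c : ZMod (2^h))

lemma lam_div_two (hh : 0 < h) : ((2^h / 2 : ℕ) : ℤ) = 2^(h-1) := by
  have h1 : (2:ℕ)^h = 2^(h-1) * 2 := by rw [← pow_succ]; congr 1; omega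
  rw [h1, Nat.mul_div_cancel _ (by norm_num)]
  push_cast
  ring

lemma quad_diff' {M : ℕ} (X X' Y Y' : ℕ → ℤ) (rn : ℕ) (hr : rn < M)
    (hX' : ∀ n, n ≠ rn → X' n = X n) (hY' : ∀ n, n ≠ rn → Y' n = Y n)
    (hXr' : X' rn = 1 - X rn) (hYr' : Y' rn = 1 - Y rn)
    (hagree : ∀ n ≤ rn, X n = Y n) :
    (∑ i ∈ Finset.range M, X' i * X' (i+1)) - (∑ i ∈ Finset.range M, X i * X (i+1))
      - ((∑ i ∈ Finset.range M, Y' i * Y' (i+1)) - (∑ i ∈ Finset.range M, Y i * Y (i+1)))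
    = (1 - 2 * X rn) * (X (rn+1) - Y (rn+1)) := by
  rw [← Finset.sum_sub_distrib, ← Finset.sum_sub_distrib, ← Finset.sum_sub_distrib]
  rw [Finset.sum_eq_single rn]
  · have h1 : X' (rn+1) = X (rn+1) := hX' _ (by omega)
    have h2 : Y' (rn+1) = Y (rn+1) := hY' _ (by omega)
    have h3 : X rn = Y rn := hagree rn le_rfl
    rw [h1, h2, hXr', hYr', ← h3]
    ring
  · intro i _ hi
    have h1 : X' i = X i := hX' _ hi
    have h2 : Y' i = Y i := hY' _ hi
    rw [h1, h2]
    by_cases hc : i + 1 = rn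
    · have h3 : X i = Y i := hagree i (by omega)
      have h4 : X rn = Y rn := hagree rn le_rfl
      rw [hc, hXr', hYr', h3, h4]
      ring
    · have h3 : X' (i+1) = X (i+1) := hX' _ hc
      have h4 : Y' (i+1) = Y (i+1) := hY' _ hc
      rw [h3, h4]
      ring
  · intro hmem
    exact absurd (Finset.mem_range.mpr hr) hmem

lemma exp_flip {h m : ℕ} (hh : 0 < h) (hm : 0 < m) (π : Equiv.Perm (Fin m))
    (cf : Fin m → ZMod (2^h)) (c : ZMod (2^h)) (t t' α : ℕ)
    (x x' y y' : Fin m → ℕ) (r : Fin m) (hr : (r:ℕ) + 1 < m)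
    (hx2 : ∀ j, x j < 2) (hy2 : ∀ j, y j < 2)
    (hx' : ∀ j, j ≠ π r → x' j = x j) (hy' : ∀ j, j ≠ π r → y' j = y j)
    (hxr' : (x' (π r) : ℤ) = 1 - (x (π r) : ℤ)) (hyr' : (y' (π r) : ℤ) = 1 - (y (π r) : ℤ))
    (hagree : ∀ β : Fin m, (β:ℕ) ≤ (r:ℕ) → x (π β) = y (π β))
    (hs : x (π ⟨(r:ℕ)+1, hr⟩) ≠ y (π ⟨(r:ℕ)+1, hr⟩)) :
    ∃ ε : ℤ, Odd ε ∧
      aFun 2 m (2^h) hm π cf c t α x' - aFun 2 m (2^h) hm π cf c t' α y'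
        = (aFun 2 m (2^h) hm π cf c t α x - aFun 2 m (2^h) hm π cf c t' α y)
          + 2^(h-1) * ε := by
  classical
  set X : ℕ → ℤ := fun n => if hn : n < m then (x (π ⟨n, hn⟩) : ℤ) else 0 with hXdef
  set X' : ℕ → ℤ := fun n => if hn : n < m then (x' (π ⟨n, hn⟩) : ℤ) else 0 with hX'def
  set Y : ℕ → ℤ := fun n => if hn : n < m then (y (π ⟨n, hn⟩) : ℤ) else 0 with hYdef
  set Y' : ℕ → ℤ := fun n => if hn : n < m then (y' (π ⟨n, hn⟩) : ℤ) else 0 with hY'def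
  set rn := (r : ℕ) with hrn
  have hrm : rn < m := by omega
  have hmkr : (⟨rn, hrm⟩ : Fin m) = r := by ext; rfl
  have hne_of_ne : ∀ (n : ℕ) (hn : n < m), n ≠ rn → π ⟨n, hn⟩ ≠ π r := by
    intro n hn hnr hc
    exact hnr (congrArg Fin.val (π.injective hc))
  have hX' : ∀ n, n ≠ rn → X' n = X n := by
    intro n hn
    by_cases h1 : n < m
    · simp only [hXdef, hX'def, dif_pos h1]
      rw [hx' _ (hne_of_ne n h1 hn)]
    · simp only [hXdef, hX'def, dif_neg h1]
  have hY' : ∀ n, n ≠ rn → Y' n = Y n := by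
    intro n hn
    by_cases h1 : n < m
    · simp only [hYdef, hY'def, dif_pos h1]
      rw [hy' _ (hne_of_ne n h1 hn)]
    · simp only [hYdef, hY'def, dif_neg h1]
  have hXr' : X' rn = 1 - X rn := by
    simp only [hXdef, hX'def, dif_pos hrm, hmkr]
    exact hxr'
  have hYr' : Y' rn = 1 - Y rn := by
    simp only [hYdef, hY'def, dif_pos hrm, hmkr]
    exact hyr'
  have hag : ∀ n ≤ rn, X n = Y n := by
    intro n hn
    have h1 : n < m := by omega
    simp only [hXdef, hYdef, dif_pos h1]
    exact_mod_cast hagree ⟨n, h1⟩ hn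
  have hQ := quad_diff' (M := m - 1) X X' Y Y' rn (by omega) hX' hY' hXr' hYr' hag
  have ex : _ = ∑ i ∈ Finset.range (m-1), X i * X (i+1) := fin_sum_to_range π x X hXdef
  have ex' : _ = ∑ i ∈ Finset.range (m-1), X' i * X' (i+1) := fin_sum_to_range π x' X' hX'def
  have ey : _ = ∑ i ∈ Finset.range (m-1), Y i * Y (i+1) := fin_sum_to_range π y Y hYdef
  have ey' : _ = ∑ i ∈ Finset.range (m-1), Y' i * Y' (i+1) := fin_sum_to_range π y' Y' hY'def
  -- linear term
  have hlin : (∑ β : Fin m, ((cf β).val : ℤ) * (x' β : ℤ))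
      - (∑ β : Fin m, ((cf β).val : ℤ) * (x β : ℤ))
      - ((∑ β : Fin m, ((cf β).val : ℤ) * (y' β : ℤ))
      - (∑ β : Fin m, ((cf β).val : ℤ) * (y β : ℤ))) = 0 := by
    rw [← Finset.sum_sub_distrib, ← Finset.sum_sub_distrib, ← Finset.sum_sub_distrib]
    apply Finset.sum_eq_zero
    intro j _
    by_cases hj : j = π r
    · subst hj
      have h3 : ((x (π r) : ℕ) : ℤ) = ((y (π r) : ℕ) : ℤ) := by
        exact_mod_cast hagree r le_rfl
      linear_combination ((cf (π r)).val : ℤ) * hxr' - ((cf (π r)).val : ℤ) * hyr'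
        - 2 * ((cf (π r)).val : ℤ) * h3
    · rw [hx' j hj, hy' j hj]
      ring
  -- alpha and t positions
  have hα : (x' (π ⟨0, hm⟩) : ℤ) - (x (π ⟨0, hm⟩) : ℤ)
      = (y' (π ⟨0, hm⟩) : ℤ) - (y (π ⟨0, hm⟩) : ℤ) := by
    by_cases h0 : (⟨0, hm⟩ : Fin m) = r
    · rw [h0, hxr', hyr']
      have h3 : x (π r) = y (π r) := hagree r le_rfl
      rw [h3]
    · have hne : π ⟨0, hm⟩ ≠ π r := fun hc => h0 (π.injective hc)
      rw [hx' _ hne, hy' _ hne]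
      ring
  have hmne : (⟨m - 1, by omega⟩ : Fin m) ≠ r := by
    intro hc
    have := congrArg Fin.val hc
    simp at this
    omega
  have hxm : x' (π ⟨m - 1, by omega⟩) = x (π ⟨m - 1, by omega⟩) :=
    hx' _ (fun hc => hmne (π.injective hc))
  have hym : y' (π ⟨m - 1, by omega⟩) = y (π ⟨m - 1, by omega⟩) :=
    hy' _ (fun hc => hmne (π.injective hc))
  -- epsilon
  refine ⟨(1 - 2 * X rn) * (X (rn+1) - Y (rn+1)), ?_, ?_⟩
  · have hxb := hx2 (π r)
    have hXv : X rn = (x (π r) : ℤ) := by simp only [hXdef, dif_pos hrm, hmkr]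
    have hXs : X (rn+1) = (x (π ⟨(r:ℕ)+1, hr⟩) : ℤ) := by simp only [hXdef, dif_pos hr]; rfl
    have hYs : Y (rn+1) = (y (π ⟨(r:ℕ)+1, hr⟩) : ℤ) := by simp only [hYdef, dif_pos hr]; rfl
    have hxs2 := hx2 (π ⟨(r:ℕ)+1, hr⟩)
    have hys2 := hy2 (π ⟨(r:ℕ)+1, hr⟩)
    have hsne : (x (π ⟨(r:ℕ)+1, hr⟩) : ℤ) ≠ (y (π ⟨(r:ℕ)+1, hr⟩) : ℤ) := by
      exact_mod_cast fun hc => hs (by exact_mod_cast hc)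
    rw [Int.odd_mul]
    constructor
    · rw [Int.odd_iff]
      omega
    · rw [Int.odd_iff, hXs, hYs]
      omega
  · unfold aFun fQuad
    rw [lam_div_two hh, ex, ex', ey, ey']
    linear_combination (2:ℤ)^(h-1) * hQ + hlin + (2:ℤ)^(h-1) * (α:ℤ) * hα
      + (2:ℤ)^(h-1) * (t:ℤ) * congrArg (Nat.cast : ℕ → ℤ) hxm
      - (2:ℤ)^(h-1) * (t':ℤ) * congrArg (Nat.cast : ℕ → ℤ) hym

lemma sig_props {h m : ℕ} (hh : 0 < h) (hm : 0 < m) (π : Equiv.Perm (Fin m))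
    (cf : Fin m → ZMod (2^h)) (c : ZMod (2^h)) (u i : ℕ) (hu : 0 < u)
    (hγ : i + u < 2^m)
    (hI2 : dig 2 m (i+u) (π ⟨0,hm⟩) = dig 2 m i (π ⟨0,hm⟩)) :
    sig m hm π u i + u < 2^m ∧
    dig 2 m (sig m hm π u i + u) (π ⟨0,hm⟩) = dig 2 m (sig m hm π u i) (π ⟨0,hm⟩) ∧
    sig m hm π u (sig m hm π u i) = i ∧
    (∀ t t' α : ℕ, ∃ ε : ℤ, Odd ε ∧
      aFun 2 m (2^h) hm π cf c t α (dig 2 m (sig m hm π u i + u))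
        - aFun 2 m (2^h) hm π cf c t' α (dig 2 m (sig m hm π u i))
      = (aFun 2 m (2^h) hm π cf c t α (dig 2 m (i+u))
        - aFun 2 m (2^h) hm π cf c t' α (dig 2 m i)) + 2^(h-1) * ε) := by
  classical
  have hne := mset_nonempty (π := π) hu hγ
  set b : Fin m := bidx m hm π u i with hbdef
  have hbmin : b = (mset m π u i).min' hne := by rw [hbdef, bidx, dif_pos hne]
  have hbmem : b ∈ mset m π u i := by rw [hbmin]; exact Finset.min'_mem _ _
  have hb0 : b ≠ ⟨0, hm⟩ := by
    intro hc
    rw [hc, mem_mset] at hbmem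
    exact hbmem hI2
  have hb1 : 1 ≤ (b : ℕ) := by
    rcases Nat.eq_zero_or_pos (b : ℕ) with h0 | h1
    · exact absurd (Fin.ext h0) hb0
    · exact h1
  set r : Fin m := rix m hm π u i with hrdef
  have hrval : (r : ℕ) = (b : ℕ) - 1 := by rw [hrdef, rix]
  have hrb : (r : ℕ) + 1 = (b : ℕ) := by omega
  have hrm : (r : ℕ) + 1 < m := by rw [hrb]; exact b.isLt
  set k : ℕ := kpos m hm π u i with hkdef
  have hkval : k = ((π r : Fin m) : ℕ) := by rw [hkdef, kpos, hrdef]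
  have hkm : k < m := by rw [hkval]; exact (π r).isLt
  have hrnotin : r ∉ mset m π u i := by
    intro hc
    have := Finset.min'_le _ _ hc
    rw [← hbmin] at this
    have : (b : ℕ) ≤ (r : ℕ) := this
    omega
  have hak : dig 2 m (i+u) (π r) = dig 2 m i (π r) := by
    rw [mem_mset] at hrnotin
    push_neg at hrnotin
    exact hrnotin
  have hak' : (i+u) / 2^k % 2 = i / 2^k % 2 := by
    have := hak
    simpa [dig, hkval] using this
  have hsig : sig m hm π u i = flp k i := by rw [sig, hkdef]
  have hflpadd : flp k (i+u) = flp k i + u := flp_add hak'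
  have hσu : sig m hm π u i + u = flp k (i+u) := by rw [hsig, hflpadd]
  -- (1)
  have h1 : sig m hm π u i + u < 2^m := by
    rw [hσu]
    exact flp_lt hkm hγ
  -- digit agreement helper on arbitrary chain positions, after the flip
  have hval_ne : ∀ j : Fin m, j ≠ π r → (j : ℕ) ≠ k := by
    intro j hj hc
    exact hj (Fin.ext (by rw [hkval] at hc; exact hc))
  have hdig_pair : ∀ β : Fin m,
      (dig 2 m (flp k (i+u)) (π β) ≠ dig 2 m (flp k i) (π β))
        ↔ (dig 2 m (i+u) (π β) ≠ dig 2 m i (π β)) := by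
    intro β
    by_cases hβ : π β = π r
    · have hβk : ((π β : Fin m) : ℕ) = k := by rw [hβ, ← hkval]
      have e1 : dig 2 m (flp k (i+u)) (π β) = 1 - dig 2 m (i+u) (π β) := by
        simp only [dig, hβk]
        exact flp_dig_self k (i+u)
      have e2 : dig 2 m (flp k i) (π β) = 1 - dig 2 m i (π β) := by
        simp only [dig, hβk]
        exact flp_dig_self k i
      have b1 := dig_lt m (i+u) (π β)
      have b2 := dig_lt m i (π β)
      rw [e1, e2]
      omega
    · have hβk : ((π β : Fin m) : ℕ) ≠ k := by
        intro hc
        exact hβ (Fin.ext (hc.trans hkval))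
      rw [dig_flp_pos m k (i+u) (π β) hβk, dig_flp_pos m k i (π β) hβk]
  -- (2)
  have h2 : dig 2 m (sig m hm π u i + u) (π ⟨0,hm⟩) = dig 2 m (sig m hm π u i) (π ⟨0,hm⟩) := by
    rw [hσu, hsig]
    have := (hdig_pair ⟨0, hm⟩)
    by_contra hc
    exact (this.mp hc) hI2
  -- mset preserved
  have hmset_eq : mset m π u (sig m hm π u i) = mset m π u i := by
    ext β
    rw [mem_mset, mem_mset, hsig, ← hflpadd]
    exact hdig_pair β
  -- (3)
  have hne2 : (mset m π u (sig m hm π u i)).Nonempty := by rw [hmset_eq]; exact hne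
  have hbidx : bidx m hm π u (sig m hm π u i) = b := by
    have e1 : bidx m hm π u (sig m hm π u i) = (mset m π u (sig m hm π u i)).min' hne2 := by
      rw [bidx, dif_pos hne2]
    rw [e1, hbmin]
    apply le_antisymm
    · exact Finset.min'_le _ _ (by rw [hmset_eq]; exact Finset.min'_mem _ _)
    · exact Finset.min'_le _ _ (by rw [← hmset_eq]; exact Finset.min'_mem _ _)
  have hrix : rix m hm π u (sig m hm π u i) = r := by
    rw [hrdef]
    unfold rix
    exact Fin.ext (by simp [hbidx, hbdef])
  have hkeq : kpos m hm π u (sig m hm π u i) = k := by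
    rw [hkval]
    unfold kpos
    rw [hrix]
  have h3 : sig m hm π u (sig m hm π u i) = i := by
    show flp (kpos m hm π u (sig m hm π u i)) (sig m hm π u i) = i
    rw [hkeq, hsig, flp_flp]
  -- (4)
  refine ⟨h1, h2, h3, ?_⟩
  intro t t' α
  have happly := exp_flip hh hm π cf c t t' α
    (dig 2 m (i+u)) (dig 2 m (flp k (i+u))) (dig 2 m i) (dig 2 m (flp k i)) r hrm
    (fun j => dig_lt m (i+u) j) (fun j => dig_lt m i j)
    (fun j hj => dig_flp_pos m k (i+u) j (hval_ne j hj))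
    (fun j hj => dig_flp_pos m k i j (hval_ne j hj))
    ?_ ?_ ?_ ?_
  · obtain ⟨ε, hodd, heq⟩ := happly
    exact ⟨ε, hodd, by rw [hσu, hsig]; exact heq⟩
  · -- hxr'
    have e := flp_dig_self k (i+u)
    have hb := bit_lt_two (i+u) k
    have hπr : dig 2 m (flp k (i+u)) (π r) = 1 - dig 2 m (i+u) (π r) := by
      simp only [dig, ← hkval]
      exact e
    rw [hπr]
    have := dig_lt m (i+u) (π r)
    omega
  · have e := flp_dig_self k i
    have hπr : dig 2 m (flp k i) (π r) = 1 - dig 2 m i (π r) := by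
      simp only [dig, ← hkval]
      exact e
    rw [hπr]
    have := dig_lt m i (π r)
    omega
  · -- hagree
    intro β hβ
    have hβnot : β ∉ mset m π u i := by
      intro hc
      have := Finset.min'_le _ _ hc
      rw [← hbmin] at this
      have : (b : ℕ) ≤ (β : ℕ) := this
      omega
    rw [mem_mset] at hβnot
    push_neg at hβnot
    exact hβnot
  · -- hs
    have hbr : (⟨(r:ℕ)+1, hrm⟩ : Fin m) = b := Fin.ext (by simp [hrb])
    rw [hbr]
    rw [mem_mset] at hbmem
    exact hbmem

end Exp

section Sums
variable {h m : ℕ} (hh : 0 < h) (hm : 0 < m) (π : Equiv.Perm (Fin m))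
  (cf : Fin m → ZMod (2^h)) (c : ZMod (2^h))

include hh

lemma alpha_diff (t t' : ℕ) (x y : Fin m → ℕ) :
    aFun 2 m (2^h) hm π cf c t 1 x - aFun 2 m (2^h) hm π cf c t' 1 y
      = (aFun 2 m (2^h) hm π cf c t 0 x - aFun 2 m (2^h) hm π cf c t' 0 y)
        + 2^(h-1) * ((x (π ⟨0, hm⟩) : ℤ) - (y (π ⟨0, hm⟩) : ℤ)) := by
  unfold aFun
  rw [lam_div_two hh]
  push_cast
  ring

lemma t_diff (t t' α : ℕ) (x : Fin m → ℕ) :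
    aFun 2 m (2^h) hm π cf c t α x - aFun 2 m (2^h) hm π cf c t' α x
      = 2^(h-1) * ((t:ℤ) - (t':ℤ)) * (x (π ⟨m-1, by omega⟩) : ℤ) := by
  unfold aFun
  rw [lam_div_two hh]
  ring

lemma pos_shift_zero (t t' u : ℕ) (hu : 0 < u) :
    ∑ i ∈ Finset.range (2^m - u), ∑ α ∈ Finset.range 2,
      omg (2^h) ^ (aFun 2 m (2^h) hm π cf c t α (dig 2 m (i+u))
        - aFun 2 m (2^h) hm π cf c t' α (dig 2 m i)) = 0 := by
  classical
  rw [← Finset.sum_filter_add_sum_filter_not (Finset.range (2^m - u))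
    (fun i => dig 2 m (i+u) (π ⟨0,hm⟩) = dig 2 m i (π ⟨0,hm⟩))]
  have hA : ∑ i ∈ (Finset.range (2^m - u)).filter
      (fun i => dig 2 m (i+u) (π ⟨0,hm⟩) = dig 2 m i (π ⟨0,hm⟩)),
      ∑ α ∈ Finset.range 2,
      omg (2^h) ^ (aFun 2 m (2^h) hm π cf c t α (dig 2 m (i+u))
        - aFun 2 m (2^h) hm π cf c t' α (dig 2 m i)) = 0 := by
    apply Finset.sum_involution (g := fun i _ => sig m hm π u i)
    · intro i hi
      obtain ⟨hi1, hi2⟩ := Finset.mem_filter.mp hi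
      have hiu : i + u < 2^m := by
        have := Finset.mem_range.mp hi1
        omega
      obtain ⟨h1, h2, h3, h4⟩ := sig_props hh hm π cf c u i hu hiu hi2
      have hterm : ∀ α ∈ Finset.range 2,
          omg (2^h) ^ (aFun 2 m (2^h) hm π cf c t α (dig 2 m (sig m hm π u i + u))
            - aFun 2 m (2^h) hm π cf c t' α (dig 2 m (sig m hm π u i)))
          = - omg (2^h) ^ (aFun 2 m (2^h) hm π cf c t α (dig 2 m (i+u))
            - aFun 2 m (2^h) hm π cf c t' α (dig 2 m i)) := by
        intro α _
        obtain ⟨ε, hodd, heq⟩ := h4 t t' α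
        rw [heq, omg_zpow_add_half hh _ ε hodd]
      rw [Finset.sum_congr rfl hterm, Finset.sum_neg_distrib]
      ring
    · intro i hi _
      exact flp_ne _ _
    · intro i hi
      obtain ⟨hi1, hi2⟩ := Finset.mem_filter.mp hi
      have hiu : i + u < 2^m := by
        have := Finset.mem_range.mp hi1
        omega
      obtain ⟨h1, h2, h3, h4⟩ := sig_props hh hm π cf c u i hu hiu hi2
      refine Finset.mem_filter.mpr ⟨Finset.mem_range.mpr (by omega), h2⟩
    · intro i hi
      obtain ⟨hi1, hi2⟩ := Finset.mem_filter.mp hi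
      have hiu : i + u < 2^m := by
        have := Finset.mem_range.mp hi1
        omega
      obtain ⟨h1, h2, h3, h4⟩ := sig_props hh hm π cf c u i hu hiu hi2
      exact h3
  have hB : ∑ i ∈ (Finset.range (2^m - u)).filter
      (fun i => ¬(dig 2 m (i+u) (π ⟨0,hm⟩) = dig 2 m i (π ⟨0,hm⟩))),
      ∑ α ∈ Finset.range 2,
      omg (2^h) ^ (aFun 2 m (2^h) hm π cf c t α (dig 2 m (i+u))
        - aFun 2 m (2^h) hm π cf c t' α (dig 2 m i)) = 0 := by
    apply Finset.sum_eq_zero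
    intro i hi
    obtain ⟨hi1, hi2⟩ := Finset.mem_filter.mp hi
    rw [Finset.sum_range_succ, Finset.sum_range_one]
    set ε : ℤ := ((dig 2 m (i+u) (π ⟨0,hm⟩) : ℕ) : ℤ) - ((dig 2 m i (π ⟨0,hm⟩) : ℕ) : ℤ) with hε
    have hodd : Odd ε := by
      rw [Int.odd_iff, hε]
      have b1 := dig_lt m (i+u) (π ⟨0,hm⟩)
      have b2 := dig_lt m i (π ⟨0,hm⟩)
      omega
    have hd := alpha_diff hh hm π cf c t t' (dig 2 m (i+u)) (dig 2 m i)
    rw [hd, omg_zpow_add_half hh _ ε hodd]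
    ring
  rw [hA, hB, add_zero]

lemma diag_zero (t t' : ℕ) (ht : t < 2) (ht' : t' < 2) (hne : t ≠ t') :
    ∑ i ∈ Finset.range (2^m), ∑ α ∈ Finset.range 2,
      omg (2^h) ^ (aFun 2 m (2^h) hm π cf c t α (dig 2 m i)
        - aFun 2 m (2^h) hm π cf c t' α (dig 2 m i)) = 0 := by
  classical
  have hm1 : m - 1 < m := by omega
  set jm : ℕ := ((π ⟨m-1, hm1⟩ : Fin m) : ℕ) with hjm
  have hjmm : jm < m := (π ⟨m-1, hm1⟩).isLt
  apply Finset.sum_involution (g := fun i _ => flp jm i)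
  · intro i hi
    set ε : ℤ := ((t:ℤ) - (t':ℤ)) * (1 - 2 * ((dig 2 m i (π ⟨m-1, hm1⟩) : ℕ) : ℤ)) with hε
    have hodd : Odd ε := by
      rw [Int.odd_iff, hε]
      have b1 := dig_lt m i (π ⟨m-1, hm1⟩)
      interval_cases t <;> interval_cases t' <;> first | omega | simp_all
    have hdig : dig 2 m (flp jm i) (π ⟨m-1, hm1⟩) = 1 - dig 2 m i (π ⟨m-1, hm1⟩) := by
      simp only [dig, ← hjm]
      exact flp_dig_self jm i
    have hterm : ∀ α ∈ Finset.range 2,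
        omg (2^h) ^ (aFun 2 m (2^h) hm π cf c t α (dig 2 m (flp jm i))
          - aFun 2 m (2^h) hm π cf c t' α (dig 2 m (flp jm i)))
        = - omg (2^h) ^ (aFun 2 m (2^h) hm π cf c t α (dig 2 m i)
          - aFun 2 m (2^h) hm π cf c t' α (dig 2 m i)) := by
      intro α _
      have e1 := t_diff hh hm π cf c t t' α (dig 2 m (flp jm i))
      have e2 := t_diff hh hm π cf c t t' α (dig 2 m i)
      have heq : aFun 2 m (2^h) hm π cf c t α (dig 2 m (flp jm i))
          - aFun 2 m (2^h) hm π cf c t' α (dig 2 m (flp jm i))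
          = (aFun 2 m (2^h) hm π cf c t α (dig 2 m i)
            - aFun 2 m (2^h) hm π cf c t' α (dig 2 m i)) + 2^(h-1) * ε := by
        rw [e1, e2, hdig]
        have b1 := dig_lt m i (π ⟨m-1, hm1⟩)
        have hcast : ((1 - dig 2 m i (π ⟨m-1, hm1⟩) : ℕ) : ℤ)
            = 1 - ((dig 2 m i (π ⟨m-1, hm1⟩) : ℕ) : ℤ) := by omega
        rw [hcast, hε]
        ring
      rw [heq, omg_zpow_add_half hh _ ε hodd]
    rw [Finset.sum_congr rfl hterm, Finset.sum_neg_distrib]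
    ring
  · intro i hi _
    exact flp_ne _ _
  · intro i hi
    exact Finset.mem_range.mpr (flp_lt hjmm (Finset.mem_range.mp hi))
  · intro i hi
    exact flp_flp jm i

end Sums

section Bridge
variable {h m : ℕ} (hh : 0 < h) (hm : 0 < m) (π : Equiv.Perm (Fin m))
  (cf : Fin m → ZMod (2^h)) (c : ZMod (2^h))

lemma corr_eq (t t' u : ℕ) :
    codeCorr 2 (2^m) (codeC 2 m (2^h) hm π cf c t) (codeC 2 m (2^h) hm π cf c t') (u : ℤ)
    = ∑ α ∈ Finset.range 2, ∑ i ∈ Finset.range (2^m - u),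
        omg (2^h) ^ (aFun 2 m (2^h) hm π cf c t α (dig 2 m (i+u))
          - aFun 2 m (2^h) hm π cf c t' α (dig 2 m i)) := by
  unfold codeCorr
  refine Finset.sum_congr rfl fun ν _ => ?_
  unfold aCorr
  rw [if_pos (Int.natCast_nonneg u)]
  simp only [Int.toNat_natCast]
  refine Finset.sum_congr rfl fun i _ => ?_
  show omg (2^h) ^ (aFun 2 m (2^h) hm π cf c t ν (dig 2 m (i+u)))
      * (starRingEnd ℂ) (omg (2^h) ^ (aFun 2 m (2^h) hm π cf c t' ν (dig 2 m i))) = _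
  rw [omg_conj_zpow, ← zpow_add₀ (omg_ne_zero _), ← sub_eq_add_neg]

lemma aCorr_neg (L : ℕ) (a b : ℕ → ℂ) (u : ℤ) (hu : u < 0) :
    aCorr L a b u = (starRingEnd ℂ) (aCorr L b a (-u)) := by
  unfold aCorr
  rw [if_neg (by omega), if_pos (by omega : (0:ℤ) ≤ -u), map_sum]
  refine Finset.sum_congr rfl fun i _ => ?_
  rw [map_mul, Complex.conj_conj]
  ring

lemma codeCorr_neg (M L : ℕ) (C D : ℕ → ℕ → ℂ) (u : ℤ) (hu : u < 0) :
    codeCorr M L C D u = (starRingEnd ℂ) (codeCorr M L D C (-u)) := by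
  unfold codeCorr
  rw [map_sum]
  exact Finset.sum_congr rfl fun ν _ => aCorr_neg L (C ν) (D ν) u hu

end Bridge


/-- for `p = 2`, `q = 2^h` (so `λ = 2^h`), the two codes `C_0^2, C_1^2`
form a `(2,2,2^m)`-CCC over `Z_{2^h}`, and in particular for each `t ∈ {0,1}` the pair
`(ψ(a_t^0), ψ(a_t^1))` is a Golay complementary pair of length `2^m`. -/
theorem statement6 (h : ℕ) (hh : 0 < h) (m : ℕ) (hm : 0 < m)
    (π : Equiv.Perm (Fin m)) (cf : Fin m → ZMod (2 ^ h)) (c : ZMod (2 ^ h)) :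
    (∀ t t' : ℕ, t < 2 → t' < 2 → ∀ u : ℤ, u.natAbs < 2 ^ m →
      codeCorr 2 (2 ^ m) (codeC 2 m (2 ^ h) hm π cf c t)
          (codeC 2 m (2 ^ h) hm π cf c t') u =
        if u = 0 ∧ t = t' then (2 : ℂ) ^ (m + 1) else 0) ∧
    (∀ t : ℕ, t < 2 → ∀ u : ℤ, u ≠ 0 → u.natAbs < 2 ^ m →
      aCorr (2 ^ m) (codeC 2 m (2 ^ h) hm π cf c t 0) (codeC 2 m (2 ^ h) hm π cf c t 0) u
        + aCorr (2 ^ m) (codeC 2 m (2 ^ h) hm π cf c t 1)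
            (codeC 2 m (2 ^ h) hm π cf c t 1) u = 0) := by
  have hpos : ∀ t t' : ℕ, t < 2 → t' < 2 → ∀ n : ℕ,
      codeCorr 2 (2 ^ m) (codeC 2 m (2 ^ h) hm π cf c t)
          (codeC 2 m (2 ^ h) hm π cf c t') (n : ℤ) =
        if n = 0 ∧ t = t' then (2 : ℂ) ^ (m + 1) else 0 := by
    intro t t' ht ht' n
    rw [corr_eq hm π cf c t t' n]
    rcases Nat.eq_zero_or_pos n with rfl | hn
    · by_cases htt : t = t'
      · subst htt
        rw [if_pos ⟨rfl, rfl⟩]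
        simp only [Nat.add_zero, sub_self, zpow_zero, Finset.sum_const,
          Finset.card_range, Nat.sub_zero, nsmul_eq_mul, mul_one]
        push_cast
        rw [pow_succ]
        ring
      · rw [if_neg (fun hc => htt hc.2), Finset.sum_comm]
        have hd := diag_zero hh hm π cf c t t' ht ht' htt
        simpa only [Nat.add_zero, Nat.sub_zero] using hd
    · rw [if_neg (fun hc => by omega), Finset.sum_comm]
      exact pos_shift_zero hh hm π cf c t t' n hn
  have main : ∀ t t' : ℕ, t < 2 → t' < 2 → ∀ u : ℤ, u.natAbs < 2 ^ m →
      codeCorr 2 (2 ^ m) (codeC 2 m (2 ^ h) hm π cf c t)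
          (codeC 2 m (2 ^ h) hm π cf c t') u =
        if u = 0 ∧ t = t' then (2 : ℂ) ^ (m + 1) else 0 := by
    intro t t' ht ht' u hab
    rcases le_or_gt 0 u with hge | hlt
    · have hu : u = ((u.toNat : ℕ) : ℤ) := (Int.toNat_of_nonneg hge).symm
      rw [hu, hpos t t' ht ht' u.toNat]
      simp [Nat.cast_eq_zero]
    · rw [codeCorr_neg _ _ _ _ u hlt]
      have hn : (-u) = (((-u).toNat : ℕ) : ℤ) := (Int.toNat_of_nonneg (by omega)).symm
      rw [hn, hpos t' t ht' ht (-u).toNat]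
      rw [if_neg (fun hc => by omega : ¬((-u).toNat = 0 ∧ t' = t))]
      rw [if_neg (fun hc => by omega : ¬(u = 0 ∧ t = t'))]
      exact map_zero _
  refine ⟨main, ?_⟩
  intro t ht u hu0 hab
  have hmain := main t t ht ht u hab
  rw [if_neg (fun hc => hu0 hc.1)] at hmain
  unfold codeCorr at hmain
  rw [Finset.sum_range_succ, Finset.sum_range_one] at hmain
  exact hmain
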